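/- arXiv:2112.07897 — 2 statements merged into one kernel-verified Lean document; each statement's English description precedes it below -/
import Mathlib

section
/- For every n ≥ 1 there exists a multiple-membership-query decision tree on vertex set V = Fin n that learns the family of all partitions of V (into any number of blocks), such that for every partition P of V into exactly k nonempty blocks the tree makes at most n·(1 + ⌈log₂ k⌉) queries on P. -/
/-- A multiple-membership-query decision tree on vertex set `Fin n` with leaf labels in `L`:
each internal node is labeled by a query `(u, S)` with `u ∉ S`, each leaf by an element of
`L`. -/
inductive MMTree (n : ℕ) (L : Type) : Type where
  | leaf : L → MMTree n L
  | node : (u : Fin n) → (S : Finset (Fin n)) → u ∉ S → MMTree n L → MMTree n L → MMTree n L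

/-- `u` and `v` lie in the same block of the partition `P`. -/
def sameBlock {n : ℕ} (P : Finpartition (Finset.univ : Finset (Fin n))) (u v : Fin n) : Prop :=
  ∃ b ∈ P.parts, u ∈ b ∧ v ∈ b

instance {n : ℕ} (P : Finpartition (Finset.univ : Finset (Fin n))) (u v : Fin n) :
    Decidable (sameBlock P u v) := by
  unfold sameBlock; infer_instance

/-- The leaf label reached by executing the tree on hidden partition `P`: at a node `(u, S)`
take the yes-branch iff some `v ∈ S` lies in the same block of `P` as `u`. -/
def MMTree.run {n : ℕ} {L : Type} :
    MMTree n L → Finpartition (Finset.univ : Finset (Fin n)) → L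
  | .leaf l, _ => l
  | .node u S _ tyes tno, P =>
      if ∃ v ∈ S, sameBlock P u v then tyes.run P else tno.run P

/-- The number of queries made on hidden partition `P`. -/
def MMTree.queries {n : ℕ} {L : Type} :
    MMTree n L → Finpartition (Finset.univ : Finset (Fin n)) → ℕ
  | .leaf _, _ => 0
  | .node u S _ tyes tno, P =>
      1 + (if ∃ v ∈ S, sameBlock P u v then tyes.queries P else tno.queries P)

/-- The depth of the tree: the maximum length of a root-to-leaf path. -/
def MMTree.depth {n : ℕ} {L : Type} : MMTree n L → ℕ
  | .leaf _ => 0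
  | .node _ _ _ tyes tno => 1 + max tyes.depth tno.depth

-- Auxiliary section
variable {n : ℕ}

abbrev FP (n : ℕ) := Finpartition (Finset.univ : Finset (Fin n))

lemma sameBlock_iff (P : FP n) (u v : Fin n) : sameBlock P u v ↔ P.part u = P.part v := by
  constructor
  · rintro ⟨b, hb, hu, hv⟩
    rw [P.part_eq_of_mem hb hu, P.part_eq_of_mem hb hv]
  · intro h
    exact ⟨P.part u, P.part_mem.2 (Finset.mem_univ u), P.mem_part (Finset.mem_univ u),
      h ▸ P.mem_part (Finset.mem_univ v)⟩

/-- representative: minimum of the block of `v`. -/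
noncomputable def repOf (P : FP n) (v : Fin n) : Fin n :=
  (P.part v).min' ⟨v, P.mem_part (Finset.mem_univ v)⟩

lemma repOf_mem (P : FP n) (v : Fin n) : repOf P v ∈ P.part v := Finset.min'_mem _ _

lemma repOf_le (P : FP n) (v : Fin n) : repOf P v ≤ v :=
  Finset.min'_le _ _ (P.mem_part (Finset.mem_univ v))

lemma repOf_eq_of_part_eq {P : FP n} {u v : Fin n} (h : P.part u = P.part v) :
    repOf P u = repOf P v := by unfold repOf; congr 1

lemma part_repOf (P : FP n) (v : Fin n) : P.part (repOf P v) = P.part v :=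
  (P.part_eq_of_mem (P.part_mem.2 (Finset.mem_univ v)) (repOf_mem P v))

lemma repOf_inj {P : FP n} {u v : Fin n} (h : repOf P u = repOf P v) :
    P.part u = P.part v := by
  have h1 := repOf_mem P u
  have h2 := repOf_mem P v
  rw [h] at h1
  exact P.eq_of_mem_parts (P.part_mem.2 (Finset.mem_univ u)) (P.part_mem.2 (Finset.mem_univ v)) h1 h2

/-- the setoid from a representative function -/
def repSetoid (r : Fin n → Fin n) : Setoid (Fin n) :=
  ⟨fun v w => r v = r w, ⟨fun _ => rfl, Eq.symm, Eq.trans⟩⟩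

instance (r : Fin n → Fin n) : DecidableRel (repSetoid r).r := fun _ _ => by
  unfold repSetoid; exact inferInstanceAs (Decidable (_ = _))

lemma finpartition_eq_of_part_eq {P Q : FP n} (h : ∀ a, P.part a = Q.part a) : P = Q := by
  ext b
  constructor
  · intro hb
    obtain ⟨a, -, ha⟩ := P.part_surjOn hb
    rw [← ha, h]
    exact Q.part_mem.2 (Finset.mem_univ a)
  · intro hb
    obtain ⟨a, -, ha⟩ := Q.part_surjOn hb
    rw [← ha, ← h]
    exact P.part_mem.2 (Finset.mem_univ a)

lemma ofSetoid_eq (P : FP n) (r : Fin n → Fin n) (h : ∀ v, r v = repOf P v) :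
    Finpartition.ofSetoid (repSetoid r) = P := by
  apply finpartition_eq_of_part_eq
  intro a
  ext b
  rw [Finpartition.mem_part_ofSetoid_iff_rel]
  show r a = r b ↔ _
  rw [h, h]
  constructor
  · intro hr
    have := repOf_inj hr
    rw [this]; exact P.mem_part (Finset.mem_univ b)
  · intro hb
    exact repOf_eq_of_part_eq ((P.part_eq_of_mem (P.part_mem.2 (Finset.mem_univ a)) hb).symm)

/-- Binary search among a list of candidates. -/
def searchTree {L : Type} (u : Fin n) (cont : Fin n → MMTree n L) : List (Fin n) → MMTree n L
  | [] => cont u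
  | [x] => cont x
  | a :: b :: rest =>
      .node u (((a :: b :: rest).take ((a :: b :: rest).length / 2)).toFinset.erase u)
        (Finset.notMem_erase _ _)
        (searchTree u cont ((a :: b :: rest).take ((a :: b :: rest).length / 2)))
        (searchTree u cont ((a :: b :: rest).drop ((a :: b :: rest).length / 2)))
  termination_by l => l.length
  decreasing_by
    all_goals simp only [List.length_take, List.length_drop, List.length_cons]; omega

theorem searchTree_spec {L : Type} (u : Fin n) (cont : Fin n → MMTree n L)
    (P : FP n) :
    ∀ (l : List (Fin n)) (x : Fin n), x ∈ l → sameBlock P u x →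
      (∀ y ∈ l, sameBlock P u y → y = x) → u ∉ l →
      (searchTree u cont l).run P = (cont x).run P ∧
      (searchTree u cont l).queries P ≤ Nat.clog 2 l.length + (cont x).queries P
  | [], x, hx, _, _, _ => absurd hx List.not_mem_nil
  | [a], x, hx, hsb, huniq, hu => by
      simp only [List.mem_singleton] at hx
      subst hx
      simp [searchTree, Nat.clog]
  | a :: b :: rest, x, hx, hsb, huniq, hu => by
      set l : List (Fin n) := a :: b :: rest with hl
      have hlen : 2 ≤ l.length := by simp [hl]
      have hsplit : l.take (l.length / 2) ++ l.drop (l.length / 2) = l := List.take_append_drop _ _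
      have hut : u ∉ (l.take (l.length / 2)).toFinset := by
        rw [List.mem_toFinset]
        exact fun h => hu (List.mem_of_mem_take h)
      have herase : (l.take (l.length / 2)).toFinset.erase u = (l.take (l.length / 2)).toFinset :=
        Finset.erase_eq_of_notMem hut
      have hcond : (∃ v ∈ (l.take (l.length / 2)).toFinset.erase u, sameBlock P u v) ↔
          (∃ v ∈ l.take (l.length / 2), sameBlock P u v) := by
        rw [herase]; simp [List.mem_toFinset]
      have hlt : l.length / 2 < l.length := by omega
      have htlen : (l.take (l.length / 2)).length = l.length / 2 := by
        simp [List.length_take]; omega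
      have hdlen : (l.drop (l.length / 2)).length = l.length - l.length / 2 :=
        List.length_drop
      have hclog : Nat.clog 2 l.length = Nat.clog 2 ((l.length + 1) / 2) + 1 :=
        Nat.clog_of_two_le one_lt_two hlen
      rw [searchTree]; simp only [← hl]
      by_cases hxt : x ∈ l.take (l.length / 2)
      · have hc : ∃ v ∈ (l.take (l.length / 2)).toFinset.erase u, sameBlock P u v :=
          hcond.mpr ⟨x, hxt, hsb⟩
        have ih := searchTree_spec u cont P (l.take (l.length / 2)) x hxt hsb
          (fun y hy => huniq y (List.mem_of_mem_take hy))
          (fun h => hu (List.mem_of_mem_take h))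
        simp only [MMTree.run, MMTree.queries, if_pos hc]
        refine ⟨ih.1, ?_⟩
        have : Nat.clog 2 (l.take (l.length / 2)).length ≤ Nat.clog 2 ((l.length + 1) / 2) := by
          apply Nat.clog_mono_right; omega
        omega
      · have hxd : x ∈ l.drop (l.length / 2) := by
          have := hsplit ▸ hx
          rcases List.mem_append.mp this with h | h
          · exact absurd h hxt
          · exact h
        have hc : ¬ ∃ v ∈ (l.take (l.length / 2)).toFinset.erase u, sameBlock P u v := by
          rw [hcond]
          rintro ⟨v, hv, hvs⟩
          exact hxt ((huniq v (List.mem_of_mem_take hv) hvs) ▸ hv)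
        have ih := searchTree_spec u cont P (l.drop (l.length / 2)) x hxd hsb
          (fun y hy => huniq y (List.mem_of_mem_drop hy))
          (fun h => hu (List.mem_of_mem_drop h))
        simp only [MMTree.run, MMTree.queries, if_neg hc]
        refine ⟨ih.1, ?_⟩
        have : Nat.clog 2 (l.drop (l.length / 2)).length ≤ Nat.clog 2 ((l.length + 1) / 2) := by
          apply Nat.clog_mono_right; omega
        omega
  termination_by l _ _ _ _ _ => l.length
  decreasing_by
    all_goals simp only [hl, List.length_take, List.length_drop, List.length_cons]; omega

/-- The main learning tree: processes vertices `m, m+1, ...` for `fuel` steps. -/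
def mainTree : ℕ → ℕ → (Fin n → Fin n) → List (Fin n) → MMTree n (FP n)
  | 0, _, r, _ => .leaf (Finpartition.ofSetoid (repSetoid r))
  | fuel + 1, m, r, reps =>
      if h : m < n then
        .node ⟨m, h⟩ (reps.toFinset.erase ⟨m, h⟩) (Finset.notMem_erase _ _)
          (searchTree ⟨m, h⟩
            (fun x => mainTree fuel (m + 1) (Function.update r ⟨m, h⟩ x) reps) reps)
          (mainTree fuel (m + 1) (Function.update r ⟨m, h⟩ ⟨m, h⟩) (reps ++ [⟨m, h⟩]))
      else .leaf (Finpartition.ofSetoid (repSetoid r))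

theorem mainTree_spec (P : FP n) :
    ∀ (fuel m : ℕ) (r : Fin n → Fin n) (reps : List (Fin n)),
      m + fuel = n →
      (∀ v : Fin n, (v : ℕ) < m → r v = repOf P v) →
      (∀ x ∈ reps, (x : ℕ) < m) →
      (∀ x ∈ reps, repOf P x = x) →
      reps.Nodup →
      (∀ v : Fin n, (v : ℕ) < m → repOf P v ∈ reps) →
      (mainTree fuel m r reps).run P = P ∧
      (mainTree fuel m r reps).queries P ≤ fuel * (1 + Nat.clog 2 P.parts.card) := by
  intro fuel
  induction fuel with
  | zero =>
      intro m r reps hmn hr _ _ _ _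
      constructor
      · simp only [mainTree, MMTree.run]
        exact ofSetoid_eq P r (fun v => hr v (by omega; ))
      · simp [mainTree, MMTree.queries]
  | succ fuel ih =>
      intro m r reps hmn hr hlt hfix hnd hcomp
      have hm : m < n := by omega
      set u : Fin n := ⟨m, hm⟩ with hu
      have humem : u ∉ reps := fun h => by have := hlt u h; simp [hu] at this
      have hunotin : u ∉ reps.toFinset := by rwa [List.mem_toFinset]
      have herase : reps.toFinset.erase u = reps.toFinset := Finset.erase_eq_of_notMem hunotin
      have hcond : (∃ v ∈ reps.toFinset.erase u, sameBlock P u v) ↔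
          (∃ v ∈ reps, sameBlock P u v) := by rw [herase]; simp [List.mem_toFinset]
      -- list length bound
      have hlen : reps.length ≤ P.parts.card := by
        rw [← List.toFinset_card_of_nodup hnd]
        apply Finset.card_le_card_of_injOn (fun x => P.part x)
        · intro x hx
          exact P.part_mem.2 (Finset.mem_univ x)
        · intro x hx y hy hxy
          rw [List.coe_toFinset] at hx hy
          rw [← hfix x hx, ← hfix y hy]
          exact repOf_eq_of_part_eq hxy
      rw [mainTree]
      rw [dif_pos hm]
      by_cases hq : ∃ v ∈ reps, sameBlock P u v
      · obtain ⟨x, hxmem, hxsb⟩ := hq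
        have huniq : ∀ y ∈ reps, sameBlock P u y → y = x := by
          intro y hy hysb
          rw [sameBlock_iff] at hxsb hysb
          rw [← hfix y hy, ← hfix x hxmem]
          exact repOf_eq_of_part_eq (hysb.symm.trans hxsb)
        have hrepu : repOf P u = x := by
          rw [sameBlock_iff] at hxsb
          rw [repOf_eq_of_part_eq hxsb, hfix x hxmem]
        have hc : ∃ v ∈ reps.toFinset.erase u, sameBlock P u v :=
          hcond.mpr ⟨x, hxmem, hxsb⟩
        simp only [MMTree.run, MMTree.queries, if_pos hc]
        simp only [← hu]
        simp only [if_pos hc]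
        have hsearch := searchTree_spec u
          (fun x => mainTree fuel (m + 1) (Function.update r u x) reps) P reps x hxmem hxsb
          huniq humem
        have hih := ih (m + 1) (Function.update r u x) reps (by omega)
          (by
            intro v hv
            by_cases hvu : v = u
            · subst hvu; rw [Function.update_self, hrepu]
            · rw [Function.update_of_ne hvu]
              apply hr
              have : (v : ℕ) ≠ m := fun h => hvu (Fin.ext h)
              omega)
          (fun x hx => Nat.lt_succ_of_lt (hlt x hx)) hfix hnd
          (by
            intro v hv
            by_cases hvu : v = u
            · subst hvu; rw [hrepu]; exact hxmem
            · apply hcomp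
              have : (v : ℕ) ≠ m := fun h => hvu (Fin.ext h)
              omega)
        refine ⟨hsearch.1.trans hih.1, ?_⟩
        have h2 := hsearch.2
        have h3 := hih.2
        have h4 : Nat.clog 2 reps.length ≤ Nat.clog 2 P.parts.card :=
          Nat.clog_mono_right _ hlen
        have hmul : (fuel + 1) * (1 + Nat.clog 2 P.parts.card)
            = (1 + Nat.clog 2 P.parts.card) + fuel * (1 + Nat.clog 2 P.parts.card) := by ring
        omega
      · have hc : ¬ ∃ v ∈ reps.toFinset.erase u, sameBlock P u v := by rw [hcond]; exact hq
        simp only [MMTree.run, MMTree.queries, if_neg hc]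
        simp only [← hu]
        simp only [if_neg hc]
        -- u is the representative of its own (new) block
        have hrepu : repOf P u = u := by
          by_contra hne
          have hle := repOf_le P u
          have hlt' : (repOf P u : ℕ) < m := by
            have h1 : (repOf P u : ℕ) ≤ (u : ℕ) := hle
            have h2 : (repOf P u : ℕ) ≠ (u : ℕ) := fun h => hne (Fin.ext h)
            have h3 : (u : ℕ) = m := rfl
            omega
          have hmem := hcomp (repOf P u) hlt'
          rw [repOf_eq_of_part_eq (part_repOf P u)] at hmem
          apply hq
          refine ⟨repOf P u, hmem, ?_⟩
          rw [sameBlock_iff]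
          exact (part_repOf P u).symm
        have hih := ih (m + 1) (Function.update r u u) (reps ++ [u]) (by omega)
          (by
            intro v hv
            by_cases hvu : v = u
            · subst hvu; rw [Function.update_self, hrepu]
            · rw [Function.update_of_ne hvu]
              apply hr
              have : (v : ℕ) ≠ m := fun h => hvu (Fin.ext h)
              omega)
          (by
            intro x hx
            rcases List.mem_append.mp hx with h | h
            · exact Nat.lt_succ_of_lt (hlt x h)
            · simp only [List.mem_singleton] at h; subst h; simp [hu])
          (by
            intro x hx
            rcases List.mem_append.mp hx with h | h
            · exact hfix x h
            · simp only [List.mem_singleton] at h; subst h; exact hrepu)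
          (by
            rw [List.nodup_append]
            exact ⟨hnd, List.nodup_singleton u, by simpa using (fun a ha h => humem (h ▸ ha) : ∀ a ∈ reps, ¬a = u)⟩)
          (by
            intro v hv
            by_cases hvu : v = u
            · subst hvu; rw [hrepu]; exact List.mem_append_right _ (List.mem_singleton_self u)
            · have : (v : ℕ) ≠ m := fun h => hvu (Fin.ext h)
              exact List.mem_append_left _ (hcomp v (by omega)))
        refine ⟨hih.1, ?_⟩
        have h3 := hih.2
        have hmul : (fuel + 1) * (1 + Nat.clog 2 P.parts.card)
            = (1 + Nat.clog 2 P.parts.card) + fuel * (1 + Nat.clog 2 P.parts.card) := by ring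
        omega

/-- For every `n ≥ 1` there is a multiple-membership-query decision tree on `Fin n` that
learns the family of all partitions of `Fin n`, making at most `n·(1 + ⌈log₂ k⌉)` queries on
every partition into exactly `k` nonempty blocks. -/
theorem mm_query_learning_upper_bound (n : ℕ) (hn : 1 ≤ n) :
    ∃ t : MMTree n (Finpartition (Finset.univ : Finset (Fin n))),
      ∀ (k : ℕ) (P : Finpartition (Finset.univ : Finset (Fin n))), P.parts.card = k →
        t.run P = P ∧ t.queries P ≤ n * (1 + Nat.clog 2 k) := by
  refine ⟨mainTree n 0 id [], ?_⟩
  intro k P hk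
  have := mainTree_spec P n 0 id [] (by omega)
    (by intro v hv; omega) (by intro x hx; simp at hx) (by intro x hx; simp at hx)
    List.nodup_nil (by intro v hv; omega)
  rw [hk] at this
  exact this
end

section
/- Let n and m be integers with m ≥ 1 and 2m ≤ n(n−1)/2. Then every vertex-neighborhood-detection decision tree on vertex set V = Fin n that learns the family of all simple graphs on V with exactly m edges has depth at least m. -/
/-- A vertex-neighborhood-detection decision tree on vertex set `Fin n` with leaf labels in
`L`: each internal node is labeled by a query `(u, S)` with `u ∉ S`, each leaf by an element
of `L`. -/
inductive NTree (n : ℕ) (L : Type u) : Type u where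
  | leaf : L → NTree n L
  | node : (u : Fin n) → (S : Finset (Fin n)) → u ∉ S → NTree n L → NTree n L → NTree n L

open Classical in
/-- The leaf label reached by executing the tree on hidden graph `G`: at a node `(u, S)` take
the yes-branch iff some `v ∈ S` is adjacent to `u` in `G`. -/
noncomputable def NTree.run {n : ℕ} {L : Type u} :
    NTree n L → SimpleGraph (Fin n) → L
  | .leaf l, _ => l
  | .node u S _ tyes tno, G =>
      if ∃ v ∈ S, G.Adj u v then tyes.run G else tno.run G

open Classical in
/-- The number of queries made on hidden graph `G`. -/
noncomputable def NTree.queries {n : ℕ} {L : Type u} :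
    NTree n L → SimpleGraph (Fin n) → ℕ
  | .leaf _, _ => 0
  | .node u S _ tyes tno, G =>
      1 + (if ∃ v ∈ S, G.Adj u v then tyes.queries G else tno.queries G)

/-- The depth of the tree: the maximum length of a root-to-leaf path. -/
def NTree.depth {n : ℕ} {L : Type u} : NTree n L → ℕ
  | .leaf _ => 0
  | .node _ _ _ tyes tno => 1 + max tyes.depth tno.depth

open Classical in
/-- The finite set of leaf labels of a tree. -/
noncomputable def NTree.leaves {n : ℕ} {L : Type u} : NTree n L → Finset L
  | .leaf l => {l}
  | .node _ _ _ tyes tno => tyes.leaves ∪ tno.leaves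

lemma NTree.run_mem_leaves {n : ℕ} {L : Type u} (t : NTree n L) (G : SimpleGraph (Fin n)) :
    t.run G ∈ t.leaves := by
  classical
  induction t with
  | leaf l => simp [NTree.run, NTree.leaves]
  | node u S h a b iha ihb =>
      simp only [NTree.run, NTree.leaves]
      split <;> [exact Finset.mem_union_left _ (by convert iha);
        exact Finset.mem_union_right _ (by convert ihb)]

lemma NTree.card_leaves_le {n : ℕ} {L : Type u} (t : NTree n L) :
    t.leaves.card ≤ 2 ^ t.depth := by
  classical
  induction t with
  | leaf l => simp [NTree.leaves, NTree.depth]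
  | node u S h a b iha ihb =>
      have h1 : a.leaves.card ≤ 2 ^ max a.depth b.depth :=
        iha.trans (Nat.pow_le_pow_right (by norm_num) (le_max_left _ _))
      have h2 : b.leaves.card ≤ 2 ^ max a.depth b.depth :=
        ihb.trans (Nat.pow_le_pow_right (by norm_num) (le_max_right _ _))
      calc (NTree.node u S h a b).leaves.card
          ≤ a.leaves.card + b.leaves.card := by
            exact Finset.card_union_le _ _
        _ ≤ 2 ^ max a.depth b.depth + 2 ^ max a.depth b.depth := Nat.add_le_add h1 h2
        _ = 2 ^ (1 + max a.depth b.depth) := by ring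
        _ = 2 ^ (NTree.node u S h a b).depth := rfl

lemma two_mul_le_two_pow (m : ℕ) : 2 * m ≤ 2 ^ m := by
  induction m with
  | zero => simp
  | succ k ih =>
      rcases Nat.eq_zero_or_pos k with rfl | hk
      · norm_num
      · have hk2 : 2 ≤ 2 ^ k := by
          calc 2 = 2 ^ 1 := rfl
            _ ≤ 2 ^ k := Nat.pow_le_pow_right (by norm_num) hk
        rw [pow_succ]
        omega

lemma two_pow_le_choose (N m : ℕ) (hm : 1 ≤ m) (h : 2 * m ≤ N) : 2 ^ m ≤ N.choose m := by
  have h1 : Nat.centralBinom m ≤ N.choose m := by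
    unfold Nat.centralBinom
    exact Nat.choose_le_choose m h
  have h2 : 4 ^ m ≤ 2 * m * Nat.centralBinom m :=
    Nat.four_pow_le_two_mul_self_mul_centralBinom m hm
  have h3 : 2 * m ≤ 2 ^ m := two_mul_le_two_pow m
  have h4 : 2 * m * 2 ^ m ≤ 2 * m * Nat.centralBinom m := by
    calc 2 * m * 2 ^ m ≤ 2 ^ m * 2 ^ m := Nat.mul_le_mul_right _ h3
      _ = 4 ^ m := by rw [← Nat.mul_pow]
      _ ≤ 2 * m * Nat.centralBinom m := h2
  have h5 : 2 ^ m ≤ Nat.centralBinom m := Nat.le_of_mul_le_mul_left h4 (by omega)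
  exact h5.trans h1

/-- Graph learning lower bound: for `m ≥ 1` with `2m ≤ n(n-1)/2`, every
vertex-neighborhood-detection decision tree that learns the family of all graphs on `Fin n`
with exactly `m` edges has depth at least `m`. -/
theorem graph_learning_lower_bound (n m : ℕ) (hm : 1 ≤ m) (hmn : 2 * m ≤ n * (n - 1) / 2)
    (t : NTree n (SimpleGraph (Fin n)))
    (hlearn : ∀ G : SimpleGraph (Fin n), G.edgeSet.ncard = m → t.run G = G) :
    m ≤ t.depth := by
  classical
  set E : Finset (Sym2 (Fin n)) := (⊤ : SimpleGraph (Fin n)).edgeFinset with hE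
  -- each m-subset of E gives a graph with m edges
  have key : ∀ s ∈ E.powersetCard m, ((SimpleGraph.fromEdgeSet (↑s : Set (Sym2 (Fin n)))).edgeSet = ↑s) := by
    intro s hs
    rw [Finset.mem_powersetCard] at hs
    rw [SimpleGraph.edgeSet_fromEdgeSet]
    refine sdiff_eq_left.mpr (Set.disjoint_left.mpr ?_)
    intro e hes he
    have : e ∈ (⊤ : SimpleGraph (Fin n)).edgeSet := by
      have := hs.1 hes
      rwa [hE, SimpleGraph.mem_edgeFinset] at this
    exact (SimpleGraph.not_isDiag_of_mem_edgeSet _ this) he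
  have hcardE : E.card = n * (n - 1) / 2 := by
    rw [hE, SimpleGraph.card_edgeFinset_top_eq_card_choose_two]
    simp [Nat.choose_two_right]
  -- injection into leaves
  have hinj : Set.InjOn (fun s : Finset (Sym2 (Fin n)) => SimpleGraph.fromEdgeSet (↑s : Set (Sym2 (Fin n))))
      ↑(E.powersetCard m) := by
    intro s₁ h₁ s₂ h₂ heq
    have e1 := key s₁ (by simpa using h₁)
    have e2 := key s₂ (by simpa using h₂)
    simp only at heq
    have : (↑s₁ : Set (Sym2 (Fin n))) = ↑s₂ := by rw [← e1, ← e2, heq]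
    exact_mod_cast this
  have hmap : ∀ s ∈ E.powersetCard m,
      SimpleGraph.fromEdgeSet (↑s : Set (Sym2 (Fin n))) ∈ t.leaves := by
    intro s hs
    have hcard : (SimpleGraph.fromEdgeSet (↑s : Set (Sym2 (Fin n)))).edgeSet.ncard = m := by
      rw [key s hs, Set.ncard_coe_finset]
      exact (Finset.mem_powersetCard.mp hs).2
    have := hlearn _ hcard
    rw [← this]
    exact NTree.run_mem_leaves t _
  have hle : (E.powersetCard m).card ≤ t.leaves.card :=
    Finset.card_le_card_of_injOn _ hmap hinj
  rw [Finset.card_powersetCard, hcardE] at hle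
  have h2 : 2 ^ m ≤ 2 ^ t.depth :=
    le_trans (two_pow_le_choose _ m hm hmn) (hle.trans t.card_leaves_le)
  exact (Nat.pow_le_pow_iff_right (by norm_num)).mp h2
end
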